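/- Let n be a positive integer, let w ∈ ℝⁿ have all nonzero components, and let θ be a positive real number. Setting v := (w₁,…,wₙ,θ) ∈ ℝ^{n+1}, one has vol_n(S_{w,θ}ⁿ ∩ Cⁿ) = 1 + (1/(2^{n−1} n! ∏_{i=1}^n wᵢ)) Σ_{s ∈ V_{n+1}^−} ε_s (v·s)₊ⁿ. -/

import Mathlib

open MeasureTheory Finset

noncomputable section SlabAux

def sgn (b : Bool) : ℝ := if b then 1 else -1

def eps {n : ℕ} (s : Fin n → Bool) : ℝ := ∏ i, sgn (s i)

def Dsum {n : ℕ} (w : Fin n → ℝ) (s : Fin n → Bool) : ℝ := ∑ i, w i * sgn (s i)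

def Phi (n : ℕ) (w : Fin n → ℝ) (t : ℝ) : ℝ :=
  (volume ({x : Fin n → ℝ | ∑ i, w i * x i ≤ t} ∩
    Set.Icc (fun _ => -(1/2 : ℝ)) (fun _ => (1/2 : ℝ)))).toReal

lemma sum_snoc_split {n : ℕ} (f : (Fin (n+1) → Bool) → ℝ) :
    ∑ s : Fin (n+1) → Bool, f s = ∑ s' : Fin n → Bool, (f (Fin.snoc s' true) + f (Fin.snoc s' false)) := by
  have h := Fintype.sum_equiv (Fin.snocEquiv (fun _ => Bool))
    (fun p : Bool × (Fin n → Bool) => f (Fin.snoc p.2 p.1)) f (fun p => rfl)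
  rw [← h, Fintype.sum_prod_type_right]
  simp [Fintype.sum_bool, add_comm]

lemma eps_snoc {n : ℕ} (s' : Fin n → Bool) (b : Bool) :
    eps (Fin.snoc s' b) = eps s' * sgn b := by
  unfold eps
  rw [Fin.prod_univ_castSucc]
  simp

lemma Dsum_snoc {n : ℕ} (w : Fin (n+1) → ℝ) (s' : Fin n → Bool) (b : Bool) :
    Dsum w (Fin.snoc s' b) = Dsum (fun j => w j.castSucc) s' + w (Fin.last n) * sgn b := by
  unfold Dsum
  rw [Fin.sum_univ_castSucc]
  simp

lemma diffSum (n : ℕ) :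
    (∀ m < n, ∀ (w : Fin n → ℝ) (a : ℝ), ∑ s : Fin n → Bool, eps s * (a + Dsum w s)^m = 0) ∧
    (∀ (w : Fin n → ℝ) (a : ℝ), ∑ s : Fin n → Bool, eps s * (a + Dsum w s)^n
        = 2^n * n.factorial * ∏ i, w i) := by
  induction n with
  | zero =>
    refine ⟨fun m hm => absurd hm (Nat.not_lt_zero m), fun w a => ?_⟩
    simp [eps, Dsum]
  | succ n ih =>
    obtain ⟨ihA, ihB⟩ := ih
    have split : ∀ (w : Fin (n+1) → ℝ) (a : ℝ) (m : ℕ),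
        ∑ s : Fin (n+1) → Bool, eps s * (a + Dsum w s)^m
          = ∑ s' : Fin n → Bool,
              (eps s' * (a + w (Fin.last n) + Dsum (fun j => w j.castSucc) s')^m
              - eps s' * (a - w (Fin.last n) + Dsum (fun j => w j.castSucc) s')^m) := by
      intro w a m
      rw [sum_snoc_split (fun s => eps s * (a + Dsum w s)^m)]
      refine Finset.sum_congr rfl fun s' _ => ?_
      rw [eps_snoc, eps_snoc, Dsum_snoc, Dsum_snoc]
      simp only [sgn]
      norm_num
      ring_nf
    constructor
    · intro m hm w a
      rw [split]
      rw [Finset.sum_sub_distrib]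
      rcases Nat.lt_succ_iff_lt_or_eq.mp hm with h | rfl
      · rw [ihA m h, ihA m h, sub_zero]
      · rw [ihB, ihB, sub_self]
    · intro w a
      rw [split]
      set W := w (Fin.last n) with hW
      set w' := fun j : Fin n => w j.castSucc with hw'
      have expand : ∀ s' : Fin n → Bool,
          eps s' * (a + W + Dsum w' s')^(n+1) - eps s' * (a - W + Dsum w' s')^(n+1)
          = ∑ k ∈ Finset.range (n+2),
              eps s' * (a + Dsum w' s')^k * ((W^(n+1-k) - (-W)^(n+1-k)) * ((n+1).choose k : ℝ)) := by
        intro s'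
        have h1 : a + W + Dsum w' s' = (a + Dsum w' s') + W := by ring
        have h2 : a - W + Dsum w' s' = (a + Dsum w' s') + (-W) := by ring
        rw [h1, h2, add_pow, add_pow, Finset.mul_sum, Finset.mul_sum, ← Finset.sum_sub_distrib]
        refine Finset.sum_congr rfl fun k _ => by ring
      simp_rw [expand]
      rw [Finset.sum_comm]
      simp_rw [← Finset.sum_mul]
      rw [Finset.sum_eq_single_of_mem n (Finset.mem_range.mpr (by omega))]
      · rw [ihB w' a]
        have h1 : n + 1 - n = 1 := by omega
        rw [h1, Nat.choose_succ_self_right, Fin.prod_univ_castSucc]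
        push_cast [Nat.factorial_succ]
        ring
      · intro k hk hkn
        rcases Nat.lt_or_ge k n with h | h
        · rw [ihA k h, zero_mul]
        · have : k = n + 1 := by simp at hk; omega
          subst this
          simp

lemma diffSum_eq (n : ℕ) : ∀ (w : Fin n → ℝ) (a : ℝ),
    ∑ s : Fin n → Bool, eps s * (a + Dsum w s)^n = 2^n * n.factorial * ∏ i, w i :=
  (diffSum n).2

lemma hasDerivAt_maxpow (n : ℕ) (hn : 1 ≤ n) (r : ℝ) :
    HasDerivAt (fun x : ℝ => max x 0 ^ (n+1)) ((n+1) * max r 0 ^ n) r := by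
  rcases lt_trichotomy r 0 with h | rfl | h
  · have : max r 0 = 0 := max_eq_right h.le
    rw [this, zero_pow (by omega), mul_zero]
    have he : (fun x : ℝ => max x 0 ^ (n+1)) =ᶠ[nhds r] fun _ => (0:ℝ) := by
      filter_upwards [Iio_mem_nhds h] with x hx
      rw [max_eq_right (le_of_lt hx), zero_pow (by omega)]
    exact (hasDerivAt_const r (0:ℝ)).congr_of_eventuallyEq he
  · rw [max_self, zero_pow (by omega), mul_zero]
    rw [hasDerivAt_iff_tendsto_slope]
    have hb : ∀ x : ℝ, x ≠ 0 → ‖slope (fun x : ℝ => max x 0 ^ (n+1)) 0 x‖ ≤ ‖x‖^n := by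
      intro x hx
      rw [slope_def_field]
      simp only [max_self, zero_pow (by omega : n+1 ≠ 0), sub_zero]
      rw [div_eq_mul_inv, norm_mul, norm_pow, norm_inv]
      calc ‖max x 0‖ ^ (n+1) * ‖x‖⁻¹ ≤ ‖x‖^(n+1) * ‖x‖⁻¹ := by
            gcongr
            rw [Real.norm_eq_abs, Real.norm_eq_abs]
            rcases le_total x 0 with h | h
            · rw [max_eq_right h]; simp [abs_nonneg]
            · simp [max_eq_left h]
        _ = ‖x‖^n := by
            rw [pow_succ, mul_assoc, mul_inv_cancel₀ (by simpa using hx), mul_one]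
    have h0 : Filter.Tendsto (fun x : ℝ => ‖x‖^n) (nhdsWithin 0 {(0:ℝ)}ᶜ) (nhds 0) := by
      have : Filter.Tendsto (fun x : ℝ => ‖x‖^n) (nhds 0) (nhds 0) := by
        have := (continuous_norm.pow n).tendsto (0:ℝ)
        convert this using 2
        all_goals simp [Pi.pow_apply, zero_pow (by omega : n ≠ 0)]
      exact this.mono_left nhdsWithin_le_nhds
    refine squeeze_zero_norm' ?_ h0
    filter_upwards [self_mem_nhdsWithin] with x hx using hb x hx
  · have : max r 0 = r := max_eq_left h.le
    rw [this]
    have he : (fun x : ℝ => max x 0 ^ (n+1)) =ᶠ[nhds r] fun x => x ^ (n+1) := by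
      filter_upwards [Ioi_mem_nhds h] with x hx
      rw [max_eq_left (le_of_lt hx)]
    refine HasDerivAt.congr_of_eventuallyEq ?_ he
    simpa using (hasDerivAt_pow (n+1) r)

lemma integral_maxpow (n : ℕ) (hn : 1 ≤ n) (c m : ℝ) (hm : m ≠ 0) :
    ∫ a in (-(1/2) : ℝ)..(1/2), max (c - m * a) 0 ^ n
      = (max (c + m/2) 0 ^ (n+1) - max (c - m/2) 0 ^ (n+1)) / ((n+1) * m) := by
  have hF : ∀ a : ℝ, HasDerivAt (fun a : ℝ => max (c - m * a) 0 ^ (n+1) / (-((n+1) * m)))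
      (max (c - m * a) 0 ^ n) a := by
    intro a
    have h1 : HasDerivAt (fun a : ℝ => c - m * a) (-m) a := by
      simpa using ((hasDerivAt_id a).const_mul m).const_sub c
    have h2 := (hasDerivAt_maxpow n hn (c - m * a)).comp a h1
    have h3 := h2.div_const (-((n+1) * m))
    refine h3.congr_deriv ?_
    field_simp
  have hcont : Continuous fun a : ℝ => max (c - m * a) 0 ^ n :=
    (((continuous_const.sub (continuous_const.mul continuous_id)).max continuous_const).pow n)
  rw [intervalIntegral.integral_eq_sub_of_hasDerivAt (fun x _ => hF x)
    (hcont.intervalIntegrable _ _)]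
  have h14 : c - m * (1/2 : ℝ) = c - m/2 := by ring
  have h24 : c - m * (-(1/2) : ℝ) = c + m/2 := by ring
  rw [h14, h24]
  field_simp
  ring

lemma integral_step_pos (c m : ℝ) (hm : 0 < m) :
    ∫ a in (-(1/2):ℝ)..(1/2), (if m * a ≤ c then (1:ℝ) else 0)
      = (max (c + m/2) 0 - max (c - m/2) 0) / m := by
  have hle : (-(1/2):ℝ) ≤ 1/2 := by norm_num
  rw [intervalIntegral.integral_of_le hle]
  have hcong : ∀ a ∈ Set.Ioc (-(1/2):ℝ) (1/2),
      (if m * a ≤ c then (1:ℝ) else 0) = (Set.Iic (c/m)).indicator (fun _ => (1:ℝ)) a := by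
    intro a _
    rw [Set.indicator_apply]
    have : (m * a ≤ c) ↔ a ∈ Set.Iic (c/m) := by
      rw [Set.mem_Iic, le_div_iff₀ hm, mul_comm]
    simp only [this]
  rw [setIntegral_congr_fun measurableSet_Ioc hcong,
    setIntegral_indicator measurableSet_Iic, Set.Ioc_inter_Iic, setIntegral_const,
    smul_eq_mul, mul_one, Real.volume_real_Ioc]
  rcases le_total c (-(m/2)) with h | h
  · have h1 : c/m ≤ -(1/2) := by rw [div_le_iff₀ hm]; nlinarith
    rw [min_eq_right (h1.trans (by norm_num)), max_eq_right (by linarith),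
      max_eq_right (by linarith : c + m/2 ≤ 0), max_eq_right (by linarith : c - m/2 ≤ 0)]
    simp
  · rcases le_total c (m/2) with h2 | h2
    · have h1 : c/m ≤ 1/2 := by rw [div_le_iff₀ hm]; nlinarith
      have h1' : -(1/2) ≤ c/m := by rw [le_div_iff₀ hm]; nlinarith
      rw [min_eq_right h1, max_eq_left (by linarith),
        max_eq_left (by linarith : (0:ℝ) ≤ c + m/2), max_eq_right (by linarith : c - m/2 ≤ 0)]
      field_simp
      ring_nf
    · have h1 : (1/2:ℝ) ≤ c/m := by rw [le_div_iff₀ hm]; nlinarith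
      rw [min_eq_left h1, max_eq_left (by norm_num),
        max_eq_left (by linarith : (0:ℝ) ≤ c + m/2), max_eq_left (by linarith : (0:ℝ) ≤ c - m/2)]
      field_simp
      ring

lemma integral_step (c m : ℝ) (hm : m ≠ 0) :
    ∫ a in (-(1/2):ℝ)..(1/2), (if m * a ≤ c then (1:ℝ) else 0)
      = (max (c + m/2) 0 - max (c - m/2) 0) / m := by
  rcases hm.lt_or_gt with h | h
  · have key := integral_step_pos c (-m) (by linarith)
    have hneg : ∫ a in (-(1/2):ℝ)..(1/2), (if m * a ≤ c then (1:ℝ) else 0)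
        = ∫ a in (-(1/2):ℝ)..(1/2), (if (-m) * a ≤ c then (1:ℝ) else 0) := by
      have := intervalIntegral.integral_comp_neg (a := (-(1/2):ℝ)) (b := (1/2:ℝ))
        (fun a => if (-m) * a ≤ c then (1:ℝ) else 0)
      simp only [neg_mul, neg_neg, mul_neg] at this ⊢
      rw [← this]
    rw [hneg, key]
    have hm' : m ≠ 0 := ne_of_lt h
    rw [div_eq_div_iff (by linarith) hm']
    ring_nf
  · exact integral_step_pos c m h

lemma phi_succ (n : ℕ) (w : Fin (n+1) → ℝ) (t : ℝ) :
    Phi (n+1) w t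
      = ∫ a in (-(1/2):ℝ)..(1/2), Phi n (fun j => w j.castSucc) (t - w (Fin.last n) * a) := by
  classical
  set S : Set (Fin (n+1) → ℝ) := {x | ∑ i, w i * x i ≤ t} ∩
    Set.Icc (fun _ => -(1/2 : ℝ)) (fun _ => (1/2 : ℝ)) with hS
  have hmeas_sum : Measurable (fun x : Fin (n+1) → ℝ => ∑ i, w i * x i) :=
    Finset.measurable_sum _ (fun i _ => (measurable_pi_apply i).const_mul _)
  have hSm : MeasurableSet S :=
    (measurableSet_le hmeas_sum measurable_const).inter measurableSet_Icc
  set S' : ℝ → Set (Fin n → ℝ) := fun a =>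
    {y : Fin n → ℝ | ∑ j, w (Fin.castSucc j) * y j ≤ t - w (Fin.last n) * a} ∩
      Set.Icc (fun _ => -(1/2:ℝ)) (fun _ => (1/2:ℝ)) with hS'
  have hS'm : ∀ a, MeasurableSet (S' a) := fun a =>
    (measurableSet_le (Finset.measurable_sum _
      fun j _ => (measurable_pi_apply j).const_mul _) measurable_const).inter measurableSet_Icc
  have hsum_eq : ∀ (a : ℝ) (y : Fin n → ℝ),
      ∑ i, w i * (Fin.snoc y a : Fin (n+1) → ℝ) i
        = ∑ j, w (Fin.castSucc j) * y j + w (Fin.last n) * a := by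
    intro a y
    rw [Fin.sum_univ_castSucc]
    simp
  have hmem : ∀ (a : ℝ) (y : Fin n → ℝ),
      ((Fin.last n).insertNth a y ∈ S) ↔ (a ∈ Set.Icc (-(1/2):ℝ) (1/2) ∧ y ∈ S' a) := by
    intro a y
    rw [Fin.insertNth_last' a y]
    simp only [hS, hS', Set.mem_inter_iff, Set.mem_setOf_eq, Set.mem_Icc, Pi.le_def, hsum_eq]
    constructor
    · rintro ⟨hsum, h1, h2⟩
      exact ⟨⟨by simpa using h1 (Fin.last n), by simpa using h2 (Fin.last n)⟩,
        by linarith, ⟨fun j => by simpa using h1 j.castSucc, fun j => by simpa using h2 j.castSucc⟩⟩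
    · rintro ⟨⟨ha1, ha2⟩, hsum, hy1, hy2⟩
      refine ⟨by linarith, fun i => ?_, fun i => ?_⟩
      · refine Fin.lastCases ?_ (fun j => ?_) i
        · simpa using ha1
        · simpa using hy1 j
      · refine Fin.lastCases ?_ (fun j => ?_) i
        · simpa using ha2
        · simpa using hy2 j
  set e := MeasurableEquiv.piFinSuccAbove (fun _ : Fin (n+1) => ℝ) (Fin.last n) with he
  have mp := (volume_preserving_piFinSuccAbove (fun _ : Fin (n+1) => ℝ) (Fin.last n)).symm
  have h1 : Phi (n+1) w t = ∫ x : Fin (n+1) → ℝ, S.indicator 1 x :=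
    (integral_indicator_one hSm).symm
  have h2 : ∫ x : Fin (n+1) → ℝ, S.indicator 1 x
      = ∫ p : ℝ × (Fin n → ℝ), S.indicator 1 (e.symm p) :=
    (mp.integral_comp (MeasurableEquiv.measurableEmbedding _) (S.indicator (1 : (Fin (n+1) → ℝ) → ℝ))).symm
  have hpt : ∀ p : ℝ × (Fin n → ℝ), S.indicator (1 : (Fin (n+1) → ℝ) → ℝ) (e.symm p)
      = (Set.Icc (-(1/2):ℝ) (1/2)).indicator 1 p.1 * (S' p.1).indicator 1 p.2 := by
    intro p
    have hesymm : e.symm p = (Fin.last n).insertNth p.1 p.2 := rfl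
    rw [hesymm]
    by_cases h : (Fin.last n).insertNth p.1 p.2 ∈ S
    · obtain ⟨ha, hy⟩ := (hmem _ _).mp h
      rw [Set.indicator_of_mem h, Set.indicator_of_mem ha, Set.indicator_of_mem hy]
      simp
    · rw [Set.indicator_of_notMem h]
      by_cases ha : p.1 ∈ Set.Icc (-(1/2):ℝ) (1/2)
      · have hy : p.2 ∉ S' p.1 := fun hy => h ((hmem _ _).mpr ⟨ha, hy⟩)
        rw [Set.indicator_of_notMem hy, mul_zero]
      · rw [Set.indicator_of_notMem ha, zero_mul]
  have hint : Integrable (fun p : ℝ × (Fin n → ℝ) => S.indicator (1 : (Fin (n+1) → ℝ) → ℝ) (e.symm p)) volume := by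
    show Integrable ((S.indicator (1 : (Fin (n+1) → ℝ) → ℝ)) ∘ ⇑e.symm) volume
    rw [mp.integrable_comp_emb (MeasurableEquiv.measurableEmbedding _)]
    rw [integrable_indicator_iff hSm]
    refine (integrableOn_const_iff (C := (1:ℝ))).mpr (Or.inr ?_)
    exact lt_of_le_of_lt (measure_mono Set.inter_subset_right)
      (IsCompact.measure_lt_top isCompact_Icc)
  rw [h1, h2]
  rw [MeasureTheory.Measure.volume_eq_prod] at hint ⊢
  rw [MeasureTheory.integral_prod _ hint]
  have hinner : ∀ a : ℝ, (∫ y : Fin n → ℝ, S.indicator (1 : (Fin (n+1) → ℝ) → ℝ) (e.symm (a, y)))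
      = (Set.Icc (-(1/2):ℝ) (1/2)).indicator
          (fun a => Phi n (fun j => w j.castSucc) (t - w (Fin.last n) * a)) a := by
    intro a
    simp only [hpt]
    rw [MeasureTheory.integral_const_mul, integral_indicator_one (hS'm a)]
    by_cases ha : a ∈ Set.Icc (-(1/2):ℝ) (1/2)
    · rw [Set.indicator_of_mem ha, Set.indicator_of_mem ha]
      simp only [Pi.one_apply, one_mul]
      rfl
    · rw [Set.indicator_of_notMem ha, Set.indicator_of_notMem ha, zero_mul]
  simp only [hinner]
  rw [integral_indicator measurableSet_Icc, MeasureTheory.integral_Icc_eq_integral_Ioc,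
    ← intervalIntegral.integral_of_le (by norm_num : (-(1/2):ℝ) ≤ 1/2)]

lemma phi_zero (w : Fin 0 → ℝ) (t : ℝ) : Phi 0 w t = if 0 ≤ t then 1 else 0 := by
  unfold Phi
  have hIcc : Set.Icc (fun _ => -(1/2:ℝ)) (fun _ => (1/2:ℝ)) = (Set.univ : Set (Fin 0 → ℝ)) := by
    ext x
    simp [Set.mem_Icc, Pi.le_def, Fin.forall_iff]
  have hvol : (volume (Set.univ : Set (Fin 0 → ℝ))) = 1 := by
    rw [MeasureTheory.volume_pi, MeasureTheory.Measure.pi_univ]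
    simp
  by_cases h : 0 ≤ t
  · simp only [Finset.univ_eq_empty, Finset.sum_empty, hIcc]
    rw [if_pos h]
    have : {x : Fin 0 → ℝ | (0:ℝ) ≤ t} = Set.univ := by ext x; simp [h]
    rw [this, Set.univ_inter, hvol]
    rfl
  · simp only [Finset.univ_eq_empty, Finset.sum_empty, hIcc]
    rw [if_neg h]
    have : {x : Fin 0 → ℝ | (0:ℝ) ≤ t} = ∅ := by ext x; simp [h]
    rw [this, Set.empty_inter]
    simp

lemma phi_formula (n : ℕ) (hn : 1 ≤ n) :
    ∀ (w : Fin n → ℝ), (∀ i, w i ≠ 0) → ∀ t : ℝ,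
      Phi n w t = (1 / ((n.factorial : ℝ) * ∏ i, w i)) *
        ∑ s : Fin n → Bool, eps s * max (t + Dsum w s / 2) 0 ^ n := by
  induction n, hn using Nat.le_induction with
  | base =>
    intro w hw t
    rw [phi_succ 0 w t]
    have h0 : ∀ a : ℝ, Phi 0 (fun j => w j.castSucc) (t - w (Fin.last 0) * a)
        = if w (Fin.last 0) * a ≤ t then (1:ℝ) else 0 := by
      intro a
      rw [phi_zero]
      congr 1
      simp [sub_nonneg]
    simp_rw [h0]
    rw [integral_step t (w (Fin.last 0)) (hw _)]
    have hsum : ∑ s : Fin 1 → Bool, eps s * max (t + Dsum w s / 2) 0 ^ 1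
        = ∑ b : Bool, sgn b * max (t + w 0 * sgn b / 2) 0 := by
      refine (Fintype.sum_equiv (Equiv.funUnique (Fin 1) Bool).symm _ _ fun b => ?_).symm
      simp [eps, Dsum, Fin.prod_univ_one, Fin.sum_univ_one, Equiv.funUnique]
    rw [hsum, Fintype.sum_bool]
    have hlast : w (Fin.last 0) = w 0 := rfl
    have e1 : t + w 0 * sgn true / 2 = t + w 0 / 2 := by simp [sgn]
    have e2 : t + w 0 * sgn false / 2 = t - w 0 / 2 := by simp [sgn]; ring
    rw [hlast, e1, e2, Fin.prod_univ_one]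
    simp only [sgn, if_true, if_false, Nat.factorial_one]
    push_cast
    ring
  | succ n hn ih =>
    intro w hw t
    set W := w (Fin.last n) with hWdef
    set w' := fun j : Fin n => w j.castSucc with hw'def
    have hW : W ≠ 0 := hw _
    have hw'ne : ∀ j, w' j ≠ 0 := fun j => hw _
    rw [phi_succ n w t]
    have hIH : ∀ a : ℝ, Phi n w' (t - W * a)
        = (1 / ((n.factorial : ℝ) * ∏ i, w' i)) *
            ∑ s : Fin n → Bool, eps s * max ((t - W * a) + Dsum w' s / 2) 0 ^ n :=
      fun a => ih w' hw'ne (t - W * a)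
    rw [← hw'def, ← hWdef]
    simp_rw [hIH]
    rw [intervalIntegral.integral_const_mul]
    have hii : ∀ s' : Fin n → Bool, IntervalIntegrable
        (fun a => eps s' * max ((t - W * a) + Dsum w' s' / 2) 0 ^ n) volume (-(1/2) : ℝ) (1/2) := by
      intro s'
      apply Continuous.intervalIntegrable
      exact continuous_const.mul ((((continuous_const.sub
        (continuous_const.mul continuous_id)).add continuous_const).max continuous_const).pow n)
    rw [intervalIntegral.integral_finset_sum (fun s' _ => hii s')]
    simp_rw [intervalIntegral.integral_const_mul]
    have hkey : ∀ s' : Fin n → Bool,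
        (∫ a in (-(1/2):ℝ)..(1/2), max ((t - W * a) + Dsum w' s' / 2) 0 ^ n)
          = (max ((t + Dsum w' s' / 2) + W/2) 0 ^ (n+1)
              - max ((t + Dsum w' s' / 2) - W/2) 0 ^ (n+1)) / ((n+1) * W) := by
      intro s'
      have : (fun a : ℝ => max ((t - W * a) + Dsum w' s' / 2) 0 ^ n)
          = fun a : ℝ => max ((t + Dsum w' s' / 2) - W * a) 0 ^ n := by
        funext a; ring_nf
      rw [this, integral_maxpow n hn (t + Dsum w' s' / 2) W hW]
    simp_rw [hkey]
    rw [sum_snoc_split (fun s => eps s * max (t + Dsum w s / 2) 0 ^ (n+1))]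
    simp only [eps_snoc, Dsum_snoc, sgn, reduceIte, ← hWdef, ← hw'def]
    rw [Fin.prod_univ_castSucc, ← hw'def, ← hWdef, Finset.mul_sum, Finset.mul_sum]
    refine Finset.sum_congr rfl fun s' _ => ?_
    have hfact : ((n+1).factorial : ℝ) = (n+1) * n.factorial := by
      push_cast [Nat.factorial_succ]; ring
    rw [hfact]
    have e1 : t + (Dsum w' s' + W * 1) / 2 = (t + Dsum w' s' / 2) + W/2 := by ring
    have e2 : t + (Dsum w' s' + W * (-1)) / 2 = (t + Dsum w' s' / 2) - W/2 := by ring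
    have e0 : (if (false = true) then (1:ℝ) else -1) = -1 := by norm_num
    rw [e0, e1, e2]
    have hfne : (n.factorial : ℝ) ≠ 0 := by positivity
    have hpne : (Finset.univ.prod w') ≠ 0 := Finset.prod_ne_zero_iff.mpr (fun i _ => hw'ne i)
    have hn1 : ((n:ℝ) + 1) ≠ 0 := by positivity
    field_simp
    ring

lemma hyperplane_null (n : ℕ) (hn : 0 < n) (w : Fin n → ℝ) (hw : w ⟨0, hn⟩ ≠ 0) (c : ℝ) :
    volume {x : Fin n → ℝ | ∑ i, w i * x i = c} = 0 := by
  classical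
  set i0 : Fin n := ⟨0, hn⟩
  set l : (Fin n → ℝ) →ₗ[ℝ] ℝ :=
    { toFun := fun x => ∑ i, w i * x i
      map_add' := by intro x y; simp [mul_add, Finset.sum_add_distrib]
      map_smul' := by
        intro c x
        simp only [Pi.smul_apply, smul_eq_mul, RingHom.id_apply, Finset.mul_sum]
        exact Finset.sum_congr rfl fun i _ => by ring } with hl
  have hker : LinearMap.ker l ≠ ⊤ := by
    intro h
    have : l (Pi.single i0 1) = 0 := by
      rw [← LinearMap.mem_ker, h]; trivial
    rw [hl] at this
    simp only [LinearMap.coe_mk, AddHom.coe_mk] at this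
    rw [Finset.sum_eq_single i0 (fun j _ hj => by simp [Pi.single_apply, hj])
      (by simp)] at this
    simp [Pi.single_apply] at this
    exact hw this
  set x0 : Fin n → ℝ := Pi.single i0 (c / w i0) with hx0
  have hlx0 : l x0 = c := by
    rw [hl]
    simp only [LinearMap.coe_mk, AddHom.coe_mk, hx0]
    rw [Finset.sum_eq_single i0 (fun j _ hj => by simp [Pi.single_apply, hj])
      (by simp)]
    simp only [Pi.single_apply, if_pos rfl, if_true]
    field_simp
  have hseteq : {x : Fin n → ℝ | ∑ i, w i * x i = c}
      = (fun x : Fin n → ℝ => x + (-x0)) ⁻¹' (LinearMap.ker l : Set (Fin n → ℝ)) := by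
    ext x
    simp only [Set.mem_setOf_eq, Set.mem_preimage, SetLike.mem_coe, LinearMap.mem_ker,
      map_add, map_neg, hlx0]
    constructor
    · intro h
      have : l x = c := by rw [hl]; exact h
      rw [this]; ring
    · intro h
      have : l x = c := by linarith [h]
      rw [hl] at this; exact this
  rw [hseteq, measure_preimage_add_right]
  exact Measure.addHaar_submodule volume _ hker

lemma max_half (r : ℝ) : max (r/2) 0 = max r 0 / 2 := by
  rcases le_total r 0 with h | h
  · rw [max_eq_right (by linarith), max_eq_right h]; norm_num
  · rw [max_eq_left (by linarith), max_eq_left h]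

lemma maxpow_id (n : ℕ) (hn : 1 ≤ n) (r : ℝ) :
    max r 0 ^ n + (-1:ℝ)^n * max (-r) 0 ^ n = r ^ n := by
  rcases le_total r 0 with h | h
  · rw [max_eq_right h, max_eq_left (by linarith), zero_pow (by omega), ← mul_pow]
    ring_nf
  · rw [max_eq_left h, max_eq_right (by linarith), zero_pow (by omega)]
    ring

lemma eps_not {n : ℕ} (s : Fin n → Bool) : eps (fun i => !(s i)) = (-1:ℝ)^n * eps s := by
  unfold eps
  have : ∀ b : Bool, sgn (!b) = -1 * sgn b := by intro b; cases b <;> simp [sgn]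
  simp_rw [this]
  rw [Finset.prod_mul_distrib, Finset.prod_const]
  simp

lemma Dsum_not {n : ℕ} (w : Fin n → ℝ) (s : Fin n → Bool) :
    Dsum w (fun i => !(s i)) = -Dsum w s := by
  unfold Dsum
  rw [← Finset.sum_neg_distrib]
  refine Finset.sum_congr rfl fun i _ => ?_
  have h : sgn (!(s i)) = - sgn (s i) := by cases s i <;> simp [sgn]
  rw [h]; ring

-- the (*) identity

lemma star_identity (n : ℕ) (hn : 1 ≤ n) (w : Fin n → ℝ) (θ : ℝ) :
    (∑ s : Fin n → Bool, eps s * max (θ + Dsum w s) 0 ^ n)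
      + (∑ s : Fin n → Bool, eps s * max (Dsum w s - θ) 0 ^ n)
      = 2^n * n.factorial * ∏ i, w i := by
  have hre : ∑ s : Fin n → Bool, eps s * max (Dsum w s - θ) 0 ^ n
      = ∑ s : Fin n → Bool, (-1:ℝ)^n * eps s * max (-(θ + Dsum w s)) 0 ^ n := by
    refine Fintype.sum_equiv (Equiv.piCongrRight (fun _ : Fin n =>
      (⟨Bool.not, Bool.not, fun b => Bool.not_not b, fun b => Bool.not_not b⟩ : Bool ≃ Bool))) _ _
      fun s => ?_
    have happ : (Equiv.piCongrRight (fun _ : Fin n =>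
      (⟨Bool.not, Bool.not, fun b => Bool.not_not b, fun b => Bool.not_not b⟩ : Bool ≃ Bool))) s
        = fun i => !(s i) := rfl
    rw [happ, eps_not, Dsum_not]
    have e1 : -(θ + -Dsum w s) = Dsum w s - θ := by ring
    rw [e1]
    have h2 : (-1:ℝ)^n * (-1:ℝ)^n = 1 := by rw [← mul_pow]; norm_num
    linear_combination (-(eps s * (max (Dsum w s - θ) 0) ^ n)) * h2
  rw [hre, ← Finset.sum_add_distrib]
  rw [← diffSum_eq n w θ]
  refine Finset.sum_congr rfl fun s _ => ?_
  have h := maxpow_id n hn (θ + Dsum w s)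
  linear_combination (eps s) * h

end SlabAux

/-- Alternative formula for the volume of a central slab of the centered unit cube:
with `v = (w₁,…,wₙ,θ)`,
`vol_n(S_{w,θ}^n ∩ C^n) = 1 + (1/(2^{n-1} n! ∏ wᵢ)) ∑_{s ∈ V_{n+1}⁻} ε_s (v·s)₊^n`,
where `V_{n+1}⁻` consists of sign vectors whose last coordinate is `-1`. -/
theorem volume_centralSlab_inter_centeredCube'
    (n : ℕ) (hn : 0 < n) (w : Fin n → ℝ) (hw : ∀ i, w i ≠ 0) (θ : ℝ) (hθ : 0 < θ) :
    (volume ({x : Fin n → ℝ | |∑ i, w i * x i| ≤ θ / 2} ∩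
        Set.Icc (fun _ => -(1/2 : ℝ)) (fun _ => (1/2 : ℝ)))).toReal =
      1 + (1 / ((2 : ℝ) ^ (n - 1) * (n.factorial : ℝ) * ∏ i, w i)) *
        ∑ s ∈ Finset.univ.filter (fun s : Fin (n + 1) → Bool => s (Fin.last n) = false),
          (∏ i, (if s i then (1 : ℝ) else -1)) *
            (max (∑ i, (Fin.snoc w θ : Fin (n + 1) → ℝ) i * (if s i then (1 : ℝ) else -1))
              0) ^ n := by
  classical
  set cube := Set.Icc (fun _ => -(1/2 : ℝ)) (fun _ => (1/2 : ℝ)) with hcube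
  set A := {x : Fin n → ℝ | ∑ i, w i * x i ≤ θ/2} ∩ cube with hA
  set B := {x : Fin n → ℝ | ∑ i, w i * x i ≤ -(θ/2)} ∩ cube with hB
  set N := {x : Fin n → ℝ | ∑ i, w i * x i = -(θ/2)} with hN
  have hmeas_sum : Measurable (fun x : Fin n → ℝ => ∑ i, w i * x i) :=
    Finset.measurable_sum _ (fun i _ => (measurable_pi_apply i).const_mul _)
  have hBm : MeasurableSet B :=
    (measurableSet_le hmeas_sum measurable_const).inter measurableSet_Icc
  have hBA : B ⊆ A := by
    intro x hx
    obtain ⟨hx1, hx2⟩ := hx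
    have hx1' : ∑ i, w i * x i ≤ -(θ/2) := hx1
    exact ⟨by simp only [Set.mem_setOf_eq]; linarith, hx2⟩
  have hcube_fin : volume (cube : Set (Fin n → ℝ)) < ⊤ := IsCompact.measure_lt_top isCompact_Icc
  have hBfin : volume B ≠ ⊤ := (lt_of_le_of_lt (measure_mono Set.inter_subset_right) hcube_fin).ne
  have hAfin : volume A ≠ ⊤ := (lt_of_le_of_lt (measure_mono Set.inter_subset_right) hcube_fin).ne
  have hNnull : volume N = 0 := hyperplane_null n hn w (hw _) _
  -- set decomposition
  have hseteq : {x : Fin n → ℝ | |∑ i, w i * x i| ≤ θ / 2} ∩ cube = (A \ B) ∪ (N ∩ cube) := by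
    ext x
    simp only [Set.mem_inter_iff, Set.mem_setOf_eq, Set.mem_union, Set.mem_diff, hA, hB, hN]
    constructor
    · rintro ⟨habs, hc⟩
      obtain ⟨h1, h2⟩ := abs_le.mp habs
      by_cases he : ∑ i, w i * x i = -(θ/2)
      · exact Or.inr ⟨he, hc⟩
      · refine Or.inl ⟨⟨h2, hc⟩, fun hB' => he (le_antisymm hB'.1 (by linarith))⟩
    · rintro (⟨⟨hle, hc⟩, hnB⟩ | ⟨heq, hc⟩)
      · have h1 : ¬(∑ i, w i * x i ≤ -(θ/2)) := fun h => hnB ⟨h, hc⟩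
        exact ⟨abs_le.mpr ⟨by linarith [not_le.mp h1], hle⟩, hc⟩
      · refine ⟨abs_le.mpr ⟨by rw [heq], by rw [heq]; linarith⟩, hc⟩
  -- volume computation
  have hvol : volume ({x : Fin n → ℝ | |∑ i, w i * x i| ≤ θ / 2} ∩ cube)
      = volume A - volume B := by
    rw [hseteq]
    have hNC : volume (N ∩ cube) = 0 :=
      measure_mono_null Set.inter_subset_left hNnull
    have h1 : volume ((A \ B) ∪ (N ∩ cube)) = volume (A \ B) := by
      refine le_antisymm ?_ (measure_mono Set.subset_union_left)
      calc volume ((A \ B) ∪ (N ∩ cube)) ≤ volume (A \ B) + volume (N ∩ cube) :=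
            measure_union_le _ _
        _ = volume (A \ B) := by rw [hNC, add_zero]
    rw [h1, measure_diff hBA hBm.nullMeasurableSet hBfin]
  have hLHS : (volume ({x : Fin n → ℝ | |∑ i, w i * x i| ≤ θ / 2} ∩ cube)).toReal
      = Phi n w (θ/2) - Phi n w (-(θ/2)) := by
    rw [hvol, ENNReal.toReal_sub_of_le (measure_mono hBA) hAfin]
    rfl
  rw [hLHS, phi_formula n hn w hw, phi_formula n hn w hw]
  -- rewrite sums with max_half
  have hhalfA : ∀ s : Fin n → Bool, max (θ/2 + Dsum w s / 2) 0 ^ n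
      = max (θ + Dsum w s) 0 ^ n / 2^n := by
    intro s
    have e : θ/2 + Dsum w s / 2 = (θ + Dsum w s)/2 := by ring
    rw [e, max_half, div_pow]
  have hhalfB : ∀ s : Fin n → Bool, max (-(θ/2) + Dsum w s / 2) 0 ^ n
      = max (Dsum w s - θ) 0 ^ n / 2^n := by
    intro s
    have e : -(θ/2) + Dsum w s / 2 = (Dsum w s - θ)/2 := by ring
    rw [e, max_half, div_pow]
  simp_rw [hhalfA, hhalfB]
  -- rewrite the filtered sum
  have hfilter : ∑ s ∈ Finset.univ.filter (fun s : Fin (n + 1) → Bool => s (Fin.last n) = false),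
        (∏ i, (if s i then (1 : ℝ) else -1)) *
          (max (∑ i, (Fin.snoc w θ : Fin (n + 1) → ℝ) i * (if s i then (1 : ℝ) else -1)) 0) ^ n
      = - ∑ s' : Fin n → Bool, eps s' * max (Dsum w s' - θ) 0 ^ n := by
    rw [← Finset.sum_neg_distrib]
    refine Finset.sum_bij' (fun s _ => (fun j => s (Fin.castSucc j) : Fin n → Bool))
      (fun s' _ => (Fin.snoc s' false : Fin (n+1) → Bool)) ?_ ?_ ?_ ?_ ?_
    · intro s hs; exact Finset.mem_univ _
    · intro s' _
      simp [Finset.mem_filter]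
    · intro s hs
      have hlast : s (Fin.last n) = false := (Finset.mem_filter.mp hs).2
      funext i
      refine Fin.lastCases ?_ (fun j => ?_) i <;>
        simp [Fin.snoc_last, Fin.snoc_castSucc, hlast]
    · intro s' _
      funext j
      simp [Fin.snoc_castSucc]
    · intro s hs
      have hlast : s (Fin.last n) = false := (Finset.mem_filter.mp hs).2
      have hprod : (∏ i, (if s i then (1 : ℝ) else -1)) = - eps (fun j => s (Fin.castSucc j)) := by
        unfold eps sgn
        rw [Fin.prod_univ_castSucc, hlast]
        norm_num
      have hsum : (∑ i, (Fin.snoc w θ : Fin (n + 1) → ℝ) i * (if s i then (1 : ℝ) else -1))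
          = Dsum w (fun j => s (Fin.castSucc j)) - θ := by
        unfold Dsum sgn
        rw [Fin.sum_univ_castSucc, hlast]
        simp [Fin.snoc_castSucc, Fin.snoc_last]
        ring
      rw [hprod, hsum]
      ring
  rw [hfilter]
  -- final algebra using star identity
  have hstar := star_identity n hn w θ
  set P := ∏ i, w i with hP
  set SA := ∑ s : Fin n → Bool, eps s * max (θ + Dsum w s) 0 ^ n with hSA
  set SC := ∑ s : Fin n → Bool, eps s * max (Dsum w s - θ) 0 ^ n with hSC
  have hPne : P ≠ 0 := Finset.prod_ne_zero_iff.mpr (fun i _ => hw i)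
  have hfne : (n.factorial : ℝ) ≠ 0 := by positivity
  have h2ne : (2:ℝ)^n ≠ 0 := by positivity
  have h2n1 : (2:ℝ)^(n-1) * 2 = 2^n := by
    rw [← pow_succ, Nat.sub_add_cancel hn]
  -- LHS sums: pull out /2^n
  have hsplitA : ∑ s : Fin n → Bool, eps s * (max (θ + Dsum w s) 0 ^ n / 2^n) = SA / 2^n := by
    rw [hSA, Finset.sum_div]
    refine Finset.sum_congr rfl fun s _ => by ring
  have hsplitB : ∑ s : Fin n → Bool, eps s * (max (Dsum w s - θ) 0 ^ n / 2^n) = SC / 2^n := by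
    rw [hSC, Finset.sum_div]
    refine Finset.sum_congr rfl fun s _ => by ring
  rw [hsplitA, hsplitB]
  -- now: (1/(n! P)) * (SA/2^n) - (1/(n! P)) * (SC/2^n) = 1 + (1/(2^(n-1) n! P)) * (-SC)
  have hSA_eq : SA = 2^n * n.factorial * P - SC := by linarith [hstar]
  rw [hSA_eq]
  field_simp
  rw [← h2n1]
  ring
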